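/- Let n ≥ 2 and consider a two-strategy anonymous game with n players: for each player i ∈ [n] and each strategy m ∈ {1,2}, a utility function u_i,m : {0,1,…,n−1} → [0,1], where the argument is the number of players other than i who play strategy 2. For a mixed profile p ∈ [0,1]^n (p_i = probability that player i plays strategy 2), let U_i,m(p) := E_{x ~ PB((p_j)_{j≠i})}[u_i,m(x)] be the expected utility of player i when playing pure strategy m. Suppose p ∈ [0,1]^n is an exact mixed Nash equilibrium, i.e. for every i: p_i > 0 implies U_i,2(p) ≥ U_i,1(p), and p_i < 1 implies U_i,1(p) ≥ U_i,2(p). Let δ ≥ 0 and let q ∈ [0,1]^n satisfy: (q_i > 0 implies p_i > 0), (q_i < 1 implies p_i < 1), and ||PB((p_j)_{j≠i}) − PB((q_j)_{j≠i})|| ≤ δ for every i ∈ [n]. Then q is a 2δ-approximate mixed Nash equilibrium: for every i, q_i > 0 implies U_i,2(q) + 2δ ≥ U_i,1(q), and q_i < 1 implies U_i,1(q) + 2δ ≥ U_i,2(q). -/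

import Mathlib

open Finset

/-- The Poisson binomial distribution: the law of the sum of independent Bernoulli
random variables indexed by `A` with expectations `p i`. -/
noncomputable def PB {ι : Type*} [DecidableEq ι] (A : Finset ι) (p : ι → ℝ) (m : ℕ) : ℝ :=
  ∑ T ∈ A.powerset.filter (fun T => T.card = m), (∏ i ∈ T, p i) * ∏ i ∈ A \ T, (1 - p i)

/-- Total variation distance between two distributions on `ℕ`. -/
noncomputable def tvDist (P Q : ℕ → ℝ) : ℝ := (1 / 2) * ∑' m : ℕ, |P m - Q m|

/-- The expected utility of player `i` in an `n`-player two-strategy anonymous game, for a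
utility function `u : {0,…,n−1} → [0,1]` of the number of other players playing strategy 2,
when the other players play strategy 2 independently with probabilities `p j`. -/
noncomputable def expUtil (n : ℕ) (u : ℕ → ℝ) (i : Fin n) (p : Fin n → ℝ) : ℝ :=
  ∑ x ∈ Finset.range n, u x * PB (Finset.univ.erase i) p x

/-- If `p` is an exact mixed Nash equilibrium of a two-strategy anonymous game and `q` has
smaller support and induces, for every player, a leave-one-out Poisson binomial distribution
within total variation distance `δ` of that of `p`, then `q` is a `2δ`-approximate mixed
Nash equilibrium. -/
lemma PB_eq_zero {ι : Type*} [DecidableEq ι] (A : Finset ι) (p : ι → ℝ) {m : ℕ}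
    (h : A.card < m) : PB A p m = 0 := by
  unfold PB
  rw [Finset.filter_false_of_mem, Finset.sum_empty]
  intro T hT hc
  exact absurd (hc ▸ Finset.card_le_card (Finset.mem_powerset.mp hT)) (not_le.mpr h)

lemma sum_PB {ι : Type*} [DecidableEq ι] (A : Finset ι) (p : ι → ℝ) :
    ∑ m ∈ Finset.range (A.card + 1), PB A p m = 1 := by
  unfold PB
  rw [Finset.sum_fiberwise_of_maps_to (g := fun T => T.card) (f := fun T => (∏ i ∈ T, p i) * ∏ i ∈ A \ T, (1 - p i))
    (fun T hT => Finset.mem_range.mpr (Nat.lt_succ_of_le (Finset.card_le_card (Finset.mem_powerset.mp hT))))]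
  rw [← Finset.prod_add]
  simp

lemma card_erase (n : ℕ) (hn : 1 ≤ n) (i : Fin n) :
    (Finset.univ.erase i).card + 1 = n := by
  rw [Finset.card_erase_of_mem (Finset.mem_univ i), Finset.card_univ, Fintype.card_fin]
  omega

lemma key (n : ℕ) (hn : 1 ≤ n) (u : ℕ → ℝ)
    (hu : ∀ x : ℕ, x ≤ n - 1 → u x ∈ Set.Icc (0 : ℝ) 1)
    (p q : Fin n → ℝ) (i : Fin n) (δ : ℝ)
    (htv : tvDist (PB (Finset.univ.erase i) p) (PB (Finset.univ.erase i) q) ≤ δ) :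
    |expUtil n u i p - expUtil n u i q| ≤ δ := by
  set A := Finset.univ.erase i with hA
  have hcard : A.card + 1 = n := card_erase n hn i
  have hPsum : ∑ x ∈ Finset.range n, PB A p x = 1 := by have := sum_PB A p; rwa [hcard] at this
  have hQsum : ∑ x ∈ Finset.range n, PB A q x = 1 := by have := sum_PB A q; rwa [hcard] at this
  have htsum : ∑' m : ℕ, |PB A p m - PB A q m| =
      ∑ x ∈ Finset.range n, |PB A p x - PB A q x| := by
    apply tsum_eq_sum
    intro x hx
    have hx' : A.card < x := by rw [Finset.mem_range] at hx; omega
    rw [PB_eq_zero A p hx', PB_eq_zero A q hx', sub_zero, abs_zero]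
  have hdiff : expUtil n u i p - expUtil n u i q =
      ∑ x ∈ Finset.range n, (u x - 1/2) * (PB A p x - PB A q x) := by
    unfold expUtil
    rw [← Finset.sum_sub_distrib]
    have : ∑ x ∈ Finset.range n, (u x - 1/2) * (PB A p x - PB A q x)
        = ∑ x ∈ Finset.range n, (u x * PB A p x - u x * PB A q x)
          - (1/2) * (∑ x ∈ Finset.range n, PB A p x - ∑ x ∈ Finset.range n, PB A q x) := by
      rw [← Finset.sum_sub_distrib, Finset.mul_sum, ← Finset.sum_sub_distrib]
      apply Finset.sum_congr rfl
      intro x _; ring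
    rw [this, hPsum, hQsum]; ring
  rw [hdiff]
  calc |∑ x ∈ Finset.range n, (u x - 1/2) * (PB A p x - PB A q x)|
      ≤ ∑ x ∈ Finset.range n, |(u x - 1/2) * (PB A p x - PB A q x)| :=
        Finset.abs_sum_le_sum_abs _ _
    _ ≤ ∑ x ∈ Finset.range n, (1/2) * |PB A p x - PB A q x| := by
        apply Finset.sum_le_sum
        intro x hx
        rw [abs_mul]
        apply mul_le_mul_of_nonneg_right _ (abs_nonneg _)
        have := hu x (by rw [Finset.mem_range] at hx; omega)
        rw [abs_le]; constructor <;> [linarith [this.1]; linarith [this.2]]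
    _ = tvDist (PB A p) (PB A q) := by
        rw [tvDist, htsum, Finset.mul_sum]
    _ ≤ δ := htv

theorem approx_nash_of_tv_close
    (n : ℕ) (hn : 2 ≤ n)
    (u1 u2 : Fin n → ℕ → ℝ)
    (hu1 : ∀ (i : Fin n) (x : ℕ), x ≤ n - 1 → u1 i x ∈ Set.Icc (0 : ℝ) 1)
    (hu2 : ∀ (i : Fin n) (x : ℕ), x ≤ n - 1 → u2 i x ∈ Set.Icc (0 : ℝ) 1)
    (p q : Fin n → ℝ)
    (hp : ∀ i, p i ∈ Set.Icc (0 : ℝ) 1) (hq : ∀ i, q i ∈ Set.Icc (0 : ℝ) 1)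
    (hNash : ∀ i : Fin n,
      (0 < p i → expUtil n (u1 i) i p ≤ expUtil n (u2 i) i p) ∧
      (p i < 1 → expUtil n (u2 i) i p ≤ expUtil n (u1 i) i p))
    (δ : ℝ) (hδ : 0 ≤ δ)
    (hsupp : ∀ i : Fin n, (0 < q i → 0 < p i) ∧ (q i < 1 → p i < 1))
    (htv : ∀ i : Fin n,
      tvDist (PB (Finset.univ.erase i) p) (PB (Finset.univ.erase i) q) ≤ δ) :
    ∀ i : Fin n,
      (0 < q i → expUtil n (u1 i) i q ≤ expUtil n (u2 i) i q + 2 * δ) ∧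
      (q i < 1 → expUtil n (u2 i) i q ≤ expUtil n (u1 i) i q + 2 * δ) := by
  intro i
  have hn1 : 1 ≤ n := by omega
  have htv' : tvDist (PB (Finset.univ.erase i) q) (PB (Finset.univ.erase i) p) ≤ δ := by
    have : tvDist (PB (Finset.univ.erase i) q) (PB (Finset.univ.erase i) p)
        = tvDist (PB (Finset.univ.erase i) p) (PB (Finset.univ.erase i) q) := by
      unfold tvDist; congr 1; exact tsum_congr fun m => abs_sub_comm _ _
    rw [this]; exact htv i
  have h1 := abs_le.mp (key n hn1 (u1 i) (hu1 i) p q i δ (htv i))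
  have h2 := abs_le.mp (key n hn1 (u2 i) (hu2 i) p q i δ (htv i))
  constructor
  · intro hqi
    have := (hNash i).1 ((hsupp i).1 hqi)
    linarith [h1.1, h1.2, h2.1, h2.2]
  · intro hqi
    have := (hNash i).2 ((hsupp i).2 hqi)
    linarith [h1.1, h1.2, h2.1, h2.2]
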